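/- For every x > 1, the function ε ↦ ε^{αρ̂−1}·∫_{1/(1+ε)}^1 (1+s)^{−αρ}·(1−s)^{−αρ̂}·(x/(1+ε) − s)^{−1} ds tends to 2^{−αρ} / ((1−αρ̂)·(x−1)) as ε → 0 from the right. -/

import Mathlib

open Real MeasureTheory Set Filter intervalIntegral
open scoped Topology

/-- `ψ_{αρ}(u) = (u−1)^{αρ̂−1}(u+1)^{αρ−1}` where `ρ̂ = 1 − ρ`. -/
noncomputable def psiRho (α ρ : ℝ) (u : ℝ) : ℝ :=
  (u - 1) ^ (α * (1 - ρ) - 1) * (u + 1) ^ (α * ρ - 1)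

/-- `ψ_{αρ̂}(u) = (u−1)^{αρ−1}(u+1)^{αρ̂−1}` where `ρ̂ = 1 − ρ`. -/
noncomputable def psiRhoHat (α ρ : ℝ) (u : ℝ) : ℝ :=
  (u - 1) ^ (α * ρ - 1) * (u + 1) ^ (α * (1 - ρ) - 1)

/-- `g(y) = (y−1)^{αρ}(y+1)^{αρ̂−1}`. -/
noncomputable def gfun (α ρ : ℝ) (y : ℝ) : ℝ :=
  (y - 1) ^ (α * ρ) * (y + 1) ^ (α * (1 - ρ) - 1)

/-- `z(x,y) = |xy−1|/|x−y|`. -/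
noncomputable def zfun (x y : ℝ) : ℝ := |x * y - 1| / |x - y|

/-- `c_{αρ} = 2^{αρ}·π·αρ·Γ(αρ)/Γ(1−αρ̂)`. -/
noncomputable def cRho (α ρ : ℝ) : ℝ :=
  2 ^ (α * ρ) * π * (α * ρ) * Real.Gamma (α * ρ) / Real.Gamma (1 - α * (1 - ρ))

/-- The harmonic function `v₁` (defined piecewise for `x > 1` and `x < −1`). -/
noncomputable def v1fun (α ρ : ℝ) (x : ℝ) : ℝ :=
  if 1 < x then
    Real.sin (π * (α * (1 - ρ))) *
      ((x + 1) * psiRho α ρ x - max (α - 1) 0 * ∫ u in (1:ℝ)..x, psiRho α ρ u)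
  else
    Real.sin (π * (α * ρ)) *
      ((|x| - 1) * psiRhoHat α ρ |x| - max (α - 1) 0 * ∫ u in (1:ℝ)..|x|, psiRhoHat α ρ u)

/-- The explicit Profeta–Simon Green function `U(x,y)` (for `x > y > 1` resp. `x < −1 < 1 < y`). -/
noncomputable def Ufun (α ρ : ℝ) (x y : ℝ) : ℝ :=
  if 1 < x then
    (2 ^ (1 - α) / (Real.Gamma (α * ρ) * Real.Gamma (α * (1 - ρ)))) *
      ((x - y) ^ (α - 1) * (∫ u in (1:ℝ)..zfun x y, psiRhoHat α ρ u)
        - max (α - 1) 0 * (∫ u in (1:ℝ)..y, psiRhoHat α ρ u) * ∫ u in (1:ℝ)..x, psiRho α ρ u)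
  else
    (Real.sin (π * (α * ρ)) / Real.sin (π * (α * (1 - ρ)))) *
    (2 ^ (1 - α) / (Real.Gamma (α * ρ) * Real.Gamma (α * (1 - ρ)))) *
      ((y - x) ^ (α - 1) * (∫ u in (1:ℝ)..zfun x y, psiRhoHat α ρ u)
        - max (α - 1) 0 * (∫ u in (1:ℝ)..y, psiRhoHat α ρ u) * ∫ u in (1:ℝ)..|x|, psiRhoHat α ρ u)

/-- For `x > 1`, as `ε → 0⁺`,
`ε^{αρ̂−1}·∫_{1/(1+ε)}^1 (1+s)^{−αρ}(1−s)^{−αρ̂}(x/(1+ε)−s)^{−1} ds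
  → 2^{−αρ}/((1−αρ̂)(x−1))`. -/

private lemma intgOneSub (β : ℝ) (hβ : β < 1) (a : ℝ) :
    IntervalIntegrable (fun s : ℝ => (1 - s) ^ (-β)) volume a 1 := by
  have h := (intervalIntegrable_rpow' (a := 1 - a) (b := 0)
      (by linarith : (-1:ℝ) < -β)).comp_sub_left 1
  simpa using h

private lemma intOneSub (β : ℝ) (hβ : β < 1) (a : ℝ) :
    ∫ s in a..(1:ℝ), (1 - s) ^ (-β) = (1 - a) ^ (1 - β) / (1 - β) := by
  have h := intervalIntegral.integral_comp_sub_left (a := a) (b := 1)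
      (fun t : ℝ => t ^ (-β)) 1
  simp only [sub_self] at h
  rw [h, integral_rpow (Or.inl (by linarith)),
    Real.zero_rpow (by intro hc; linarith : -β + 1 ≠ 0),
    show -β + 1 = 1 - β by ring]
  ring

private lemma key_stmt14 (β γ : ℝ) (hβ0 : 0 < β) (hβ1 : β < 1) (hγ0 : 0 < γ)
    (x : ℝ) (hx : 1 < x) :
    Tendsto (fun ε : ℝ =>
        ε ^ (β - 1) * ∫ s in (1 / (1 + ε))..(1:ℝ),
          (1 + s) ^ (-γ) * (1 - s) ^ (-β) * (x / (1 + ε) - s)⁻¹)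
      (𝓝[>] (0:ℝ)) (𝓝 (2 ^ (-γ) / ((1 - β) * (x - 1)))) := by
  have hb : 0 < 1 - β := by linarith
  have hx1 : 0 < x - 1 := by linarith
  have c1 : ContinuousAt (fun ε : ℝ => (1 + ε) ^ (β - 1)) 0 :=
    ContinuousAt.rpow_const (by fun_prop) (Or.inl (by norm_num))
  have clo : Tendsto (fun ε : ℝ =>
      2 ^ (-γ) * ((1 + ε) / (x - 1)) * ((1 + ε) ^ (β - 1) / (1 - β)))
      (𝓝[>] 0) (𝓝 (2 ^ (-γ) / ((1 - β) * (x - 1)))) := by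
    have hc : ContinuousAt (fun ε : ℝ =>
        2 ^ (-γ) * ((1 + ε) / (x - 1)) * ((1 + ε) ^ (β - 1) / (1 - β))) 0 := by
      apply ContinuousAt.mul
      · exact continuousAt_const.mul (ContinuousAt.div_const (by fun_prop) _)
      · exact c1.div_const _
    have h0 : 2 ^ (-γ) * ((1 + (0:ℝ)) / (x - 1)) * ((1 + (0:ℝ)) ^ (β - 1) / (1 - β)) =
        2 ^ (-γ) / ((1 - β) * (x - 1)) := by
      rw [add_zero, Real.one_rpow, mul_one_div, mul_one_div, div_div,
        mul_comm (x - 1) (1 - β)]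
    exact h0 ▸ hc.tendsto.mono_left nhdsWithin_le_nhds
  have chi : Tendsto (fun ε : ℝ =>
      (1 + 1 / (1 + ε)) ^ (-γ) * ((1 + ε) / (x - 1 - ε)) * ((1 + ε) ^ (β - 1) / (1 - β)))
      (𝓝[>] 0) (𝓝 (2 ^ (-γ) / ((1 - β) * (x - 1)))) := by
    have hc : ContinuousAt (fun ε : ℝ =>
        (1 + 1 / (1 + ε)) ^ (-γ) * ((1 + ε) / (x - 1 - ε)) * ((1 + ε) ^ (β - 1) / (1 - β))) 0 := by
      apply ContinuousAt.mul
      · apply ContinuousAt.mul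
        · exact ContinuousAt.rpow_const
            (continuousAt_const.add (continuousAt_const.div (by fun_prop) (by norm_num)))
            (Or.inl (by norm_num))
        · exact ContinuousAt.div (by fun_prop) (by fun_prop)
            (by show x - 1 - (0:ℝ) ≠ 0; rw [sub_zero]; exact hx1.ne')
      · exact c1.div_const _
    have h0 : (1 + 1 / (1 + (0:ℝ))) ^ (-γ) * ((1 + (0:ℝ)) / (x - 1 - 0)) *
        ((1 + (0:ℝ)) ^ (β - 1) / (1 - β)) = 2 ^ (-γ) / ((1 - β) * (x - 1)) := by
      have h2 : (1:ℝ) + 1 / (1 + (0:ℝ)) = 2 := by norm_num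
      rw [h2, add_zero, sub_zero, Real.one_rpow, mul_one_div, mul_one_div, div_div,
        mul_comm (x - 1) (1 - β)]
    exact h0 ▸ hc.tendsto.mono_left nhdsWithin_le_nhds
  have hEv : ∀ᶠ ε in 𝓝[>] (0:ℝ),
      2 ^ (-γ) * ((1 + ε) / (x - 1)) * ((1 + ε) ^ (β - 1) / (1 - β)) ≤
        ε ^ (β - 1) * ∫ s in (1 / (1 + ε))..(1:ℝ),
          (1 + s) ^ (-γ) * (1 - s) ^ (-β) * (x / (1 + ε) - s)⁻¹ ∧
      ε ^ (β - 1) * ∫ s in (1 / (1 + ε))..(1:ℝ),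
          (1 + s) ^ (-γ) * (1 - s) ^ (-β) * (x / (1 + ε) - s)⁻¹ ≤
        (1 + 1 / (1 + ε)) ^ (-γ) * ((1 + ε) / (x - 1 - ε)) * ((1 + ε) ^ (β - 1) / (1 - β)) := by
    filter_upwards [Ioo_mem_nhdsGT_of_mem (⟨le_rfl, hx1⟩ : (0:ℝ) ∈ Ico 0 (x - 1))]
      with ε hε
    obtain ⟨hε0, hεx⟩ := hε
    have h1ε : (0:ℝ) < 1 + ε := by linarith
    have ha0 : 0 < 1 / (1 + ε) := by positivity
    have ha1 : 1 / (1 + ε) < 1 := by rw [div_lt_one h1ε]; linarith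
    have hxd : 1 < x / (1 + ε) := by rw [lt_div_iff₀ h1ε]; linarith
    have hpt : ∀ s ∈ Icc (1 / (1 + ε)) (1:ℝ),
        2 ^ (-γ) * ((1 + ε) / (x - 1)) * (1 - s) ^ (-β) ≤
          (1 + s) ^ (-γ) * (1 - s) ^ (-β) * (x / (1 + ε) - s)⁻¹ ∧
        (1 + s) ^ (-γ) * (1 - s) ^ (-β) * (x / (1 + ε) - s)⁻¹ ≤
          (1 + 1 / (1 + ε)) ^ (-γ) * ((1 + ε) / (x - 1 - ε)) * (1 - s) ^ (-β) := by
      intro s hs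
      obtain ⟨hsa, hs1⟩ := hs
      have hs0 : (0:ℝ) < 1 + s := by linarith
      have h1s : (0:ℝ) ≤ 1 - s := by linarith
      have hD0 : 0 < x / (1 + ε) - s := by linarith
      have hA1 : (1 + s) ^ (-γ) ≤ (1 + 1 / (1 + ε)) ^ (-γ) :=
        Real.rpow_le_rpow_of_nonpos (by linarith) (by linarith) (by linarith)
      have hA2 : (2:ℝ) ^ (-γ) ≤ (1 + s) ^ (-γ) :=
        Real.rpow_le_rpow_of_nonpos hs0 (by linarith) (by linarith)
      have elow : x / (1 + ε) - 1 = (x - 1 - ε) / (1 + ε) := by field_simp; ring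
      have ehigh : x / (1 + ε) - 1 / (1 + ε) = (x - 1) / (1 + ε) := by ring
      have hposlow : (0:ℝ) < (x - 1 - ε) / (1 + ε) := div_pos (by linarith) h1ε
      have hC1 : (x / (1 + ε) - s)⁻¹ ≤ (1 + ε) / (x - 1 - ε) := by
        rw [← inv_div (x - 1 - ε) (1 + ε)]
        exact inv_anti₀ hposlow (by rw [← elow]; linarith)
      have hC2 : (1 + ε) / (x - 1) ≤ (x / (1 + ε) - s)⁻¹ := by
        rw [← inv_div (x - 1) (1 + ε)]
        exact inv_anti₀ hD0 (by rw [← ehigh]; linarith)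
      have hbn : (0:ℝ) ≤ (1 - s) ^ (-β) := Real.rpow_nonneg h1s _
      constructor
      · calc 2 ^ (-γ) * ((1 + ε) / (x - 1)) * (1 - s) ^ (-β)
            = (2 ^ (-γ) * (1 - s) ^ (-β)) * ((1 + ε) / (x - 1)) := by ring
          _ ≤ (1 + s) ^ (-γ) * (1 - s) ^ (-β) * (x / (1 + ε) - s)⁻¹ :=
            mul_le_mul (mul_le_mul_of_nonneg_right hA2 hbn) hC2
              (div_nonneg h1ε.le hx1.le)
              (mul_nonneg (Real.rpow_nonneg hs0.le _) hbn)
      · calc (1 + s) ^ (-γ) * (1 - s) ^ (-β) * (x / (1 + ε) - s)⁻¹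
            ≤ ((1 + 1 / (1 + ε)) ^ (-γ) * (1 - s) ^ (-β)) * ((1 + ε) / (x - 1 - ε)) :=
            mul_le_mul (mul_le_mul_of_nonneg_right hA1 hbn) hC1
              (inv_nonneg.mpr hD0.le)
              (mul_nonneg (Real.rpow_nonneg (by linarith) _) hbn)
          _ = (1 + 1 / (1 + ε)) ^ (-γ) * ((1 + ε) / (x - 1 - ε)) * (1 - s) ^ (-β) := by ring
    have hJ : IntervalIntegrable (fun s : ℝ => (1 - s) ^ (-β)) volume (1 / (1 + ε)) 1 :=
      intgOneSub β hβ1 _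
    have hLo : IntervalIntegrable
        (fun s : ℝ => 2 ^ (-γ) * ((1 + ε) / (x - 1)) * (1 - s) ^ (-β))
        volume (1 / (1 + ε)) 1 := hJ.const_mul _
    have hHi : IntervalIntegrable
        (fun s : ℝ => (1 + 1 / (1 + ε)) ^ (-γ) * ((1 + ε) / (x - 1 - ε)) * (1 - s) ^ (-β))
        volume (1 / (1 + ε)) 1 := hJ.const_mul _
    have hFm : AEStronglyMeasurable
        (fun s : ℝ => (1 + s) ^ (-γ) * (1 - s) ^ (-β) * (x / (1 + ε) - s)⁻¹)
        (volume.restrict (uIoc (1 / (1 + ε)) 1)) := by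
      have hcont : ContinuousOn
          (fun s : ℝ => (1 + s) ^ (-γ) * (1 - s) ^ (-β) * (x / (1 + ε) - s)⁻¹)
          (Ioo (1 / (1 + ε)) 1) := by
        apply ContinuousOn.mul
        · apply ContinuousOn.mul
          · exact ContinuousOn.rpow_const (by fun_prop)
              (fun s hs => Or.inl (by have := hs.1; intro hc; nlinarith [ha0]))
          · exact ContinuousOn.rpow_const (by fun_prop)
              (fun s hs => Or.inl (by have := hs.2; intro hc; linarith))
        · exact ContinuousOn.inv₀ (by fun_prop)
            (fun s hs => by have := hs.2; intro hc; nlinarith [hxd])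
      have h := hcont.aestronglyMeasurable (μ := volume) measurableSet_Ioo
      rwa [Measure.restrict_congr_set Ioo_ae_eq_Ioc, ← uIoc_of_le ha1.le] at h
    have hF : IntervalIntegrable
        (fun s : ℝ => (1 + s) ^ (-γ) * (1 - s) ^ (-β) * (x / (1 + ε) - s)⁻¹)
        volume (1 / (1 + ε)) 1 := by
      apply hHi.mono_fun' hFm
      rw [uIoc_of_le ha1.le]
      refine (ae_restrict_iff' measurableSet_Ioc).mpr (ae_of_all _ fun s hs => ?_)
      have hs' : s ∈ Icc (1 / (1 + ε)) (1:ℝ) := ⟨hs.1.le, hs.2⟩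
      have hnn : 0 ≤ (1 + s) ^ (-γ) * (1 - s) ^ (-β) * (x / (1 + ε) - s)⁻¹ := by
        have hs0 : (0:ℝ) < 1 + s := by have := hs'.1; nlinarith [ha0]
        have hD0 : 0 < x / (1 + ε) - s := by have := hs'.2; linarith
        exact mul_nonneg (mul_nonneg (Real.rpow_nonneg hs0.le _)
          (Real.rpow_nonneg (by have := hs'.2; linarith) _)) (inv_nonneg.mpr hD0.le)
      show ‖(1 + s) ^ (-γ) * (1 - s) ^ (-β) * (x / (1 + ε) - s)⁻¹‖ ≤
        (1 + 1 / (1 + ε)) ^ (-γ) * ((1 + ε) / (x - 1 - ε)) * (1 - s) ^ (-β)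
      rw [Real.norm_eq_abs, abs_of_nonneg hnn]
      exact (hpt s hs').2
    have I1 : (∫ s in (1 / (1 + ε))..(1:ℝ),
          2 ^ (-γ) * ((1 + ε) / (x - 1)) * (1 - s) ^ (-β)) ≤
        ∫ s in (1 / (1 + ε))..(1:ℝ),
          (1 + s) ^ (-γ) * (1 - s) ^ (-β) * (x / (1 + ε) - s)⁻¹ :=
      intervalIntegral.integral_mono_on ha1.le hLo hF (fun s hs => (hpt s hs).1)
    have I2 : (∫ s in (1 / (1 + ε))..(1:ℝ),
          (1 + s) ^ (-γ) * (1 - s) ^ (-β) * (x / (1 + ε) - s)⁻¹) ≤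
        ∫ s in (1 / (1 + ε))..(1:ℝ),
          (1 + 1 / (1 + ε)) ^ (-γ) * ((1 + ε) / (x - 1 - ε)) * (1 - s) ^ (-β) :=
      intervalIntegral.integral_mono_on ha1.le hF hHi (fun s hs => (hpt s hs).2)
    have hεpow : (0:ℝ) ≤ ε ^ (β - 1) := Real.rpow_nonneg hε0.le _
    have hkey : ε ^ (β - 1) * ((1 - 1 / (1 + ε)) ^ (1 - β) / (1 - β)) =
        (1 + ε) ^ (β - 1) / (1 - β) := by
      have hfrac : 1 - 1 / (1 + ε) = ε / (1 + ε) := by field_simp; ring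
      rw [hfrac, Real.div_rpow hε0.le h1ε.le]
      have e1 : ε ^ (β - 1) * ε ^ (1 - β) = 1 := by
        rw [← Real.rpow_add hε0]; norm_num
      have e2 : (1 + ε) ^ (β - 1) * (1 + ε) ^ (1 - β) = 1 := by
        rw [← Real.rpow_add h1ε]; norm_num
      have p2 : (0:ℝ) < (1 + ε) ^ (1 - β) := Real.rpow_pos_of_pos h1ε _
      field_simp
      nlinarith [e1, e2, p2]
    constructor
    · calc 2 ^ (-γ) * ((1 + ε) / (x - 1)) * ((1 + ε) ^ (β - 1) / (1 - β))
          = (2 ^ (-γ) * ((1 + ε) / (x - 1))) * ((1 + ε) ^ (β - 1) / (1 - β)) := by ring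
        _ = (2 ^ (-γ) * ((1 + ε) / (x - 1))) *
            (ε ^ (β - 1) * ((1 - 1 / (1 + ε)) ^ (1 - β) / (1 - β))) := by rw [hkey]
        _ = ε ^ (β - 1) * ((2 ^ (-γ) * ((1 + ε) / (x - 1))) *
            ((1 - 1 / (1 + ε)) ^ (1 - β) / (1 - β))) := by ring
        _ = ε ^ (β - 1) * ∫ s in (1 / (1 + ε))..(1:ℝ),
            2 ^ (-γ) * ((1 + ε) / (x - 1)) * (1 - s) ^ (-β) := by
          rw [intervalIntegral.integral_const_mul, intOneSub β hβ1]
        _ ≤ _ := mul_le_mul_of_nonneg_left I1 hεpow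
    · calc ε ^ (β - 1) * ∫ s in (1 / (1 + ε))..(1:ℝ),
            (1 + s) ^ (-γ) * (1 - s) ^ (-β) * (x / (1 + ε) - s)⁻¹
          ≤ ε ^ (β - 1) * ∫ s in (1 / (1 + ε))..(1:ℝ),
            (1 + 1 / (1 + ε)) ^ (-γ) * ((1 + ε) / (x - 1 - ε)) * (1 - s) ^ (-β) :=
            mul_le_mul_of_nonneg_left I2 hεpow
        _ = ε ^ (β - 1) * (((1 + 1 / (1 + ε)) ^ (-γ) * ((1 + ε) / (x - 1 - ε))) *
            ((1 - 1 / (1 + ε)) ^ (1 - β) / (1 - β))) := by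
          rw [intervalIntegral.integral_const_mul, intOneSub β hβ1]
        _ = ((1 + 1 / (1 + ε)) ^ (-γ) * ((1 + ε) / (x - 1 - ε))) *
            (ε ^ (β - 1) * ((1 - 1 / (1 + ε)) ^ (1 - β) / (1 - β))) := by ring
        _ = (1 + 1 / (1 + ε)) ^ (-γ) * ((1 + ε) / (x - 1 - ε)) *
            ((1 + ε) ^ (β - 1) / (1 - β)) := by rw [hkey]
  exact tendsto_of_tendsto_of_tendsto_of_le_of_le' clo chi
    (hEv.mono fun ε h => h.1) (hEv.mono fun ε h => h.2)

theorem stmt_14 (α ρ : ℝ) (hα0 : 0 < α) (hα2 : α < 2) (hρ0 : 0 < ρ) (hρ1 : ρ < 1)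
    (hαρ : α * ρ < 1) (hαρh : α * (1 - ρ) < 1)
    (x : ℝ) (hx : 1 < x) :
    Tendsto (fun ε : ℝ =>
        ε ^ (α * (1 - ρ) - 1) * ∫ s in (1 / (1 + ε))..(1:ℝ),
          (1 + s) ^ (-(α * ρ)) * (1 - s) ^ (-(α * (1 - ρ))) * (x / (1 + ε) - s)⁻¹)
      (𝓝[>] (0:ℝ)) (𝓝 (2 ^ (-(α * ρ)) / ((1 - α * (1 - ρ)) * (x - 1)))) :=
  key_stmt14 (α * (1 - ρ)) (α * ρ) (mul_pos hα0 (by linarith)) hαρh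
    (mul_pos hα0 hρ0) x hx
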